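/- Let I ⊆ ℝ be an open interval, let γ : I → ℝ² be a C¹ curve parametrized by arc length with unit tangent τ(s) = γ'(s), and let n : I → ℝ² be a differentiable map of unit vectors with τ(s) = (−n₂(s), n₁(s)) and n'(s) = κ(s) τ(s) for a function κ : I → ℝ. Let v : ℝ² → ℝ² be C¹ and suppose v(γ(s)) · n(s) = 0 for all s ∈ I. Then for all s ∈ I, (Dv(γ(s)) n(s)) · τ(s) = ω(v)(γ(s)) − κ(s) (v(γ(s)) · τ(s)). -/

import Mathlib

noncomputable section

/-- Dot product on `ℝ²` (realized as `Fin 2 → ℝ`). -/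
def dot2 (u w : Fin 2 → ℝ) : ℝ := u 0 * w 0 + u 1 * w 1

/-- Vorticity `ω(v)(x) = ∂₁v²(x) − ∂₂v¹(x)` (components indexed `0,1`). -/
def vort (v : (Fin 2 → ℝ) → Fin 2 → ℝ) (x : Fin 2 → ℝ) : ℝ :=
  fderiv ℝ v x (Pi.single 0 1) 1 - fderiv ℝ v x (Pi.single 1 1) 0

/-- Along a `C¹` arc-length curve `γ` in the open interval `(a,b)`, with unit normal `n`,
positively-oriented tangent `τ = (−n₂, n₁) = γ'` and `n' = κ τ`, if a `C¹` vector field `v`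
satisfies `v(γ(s)) ⬝ n(s) = 0`, then
`(Dv(γ(s)) n(s)) ⬝ τ(s) = ω(v)(γ(s)) − κ(s) (v(γ(s)) ⬝ τ(s))`. -/
theorem grad_n_dot_tau (a b : ℝ) (γ τ n : ℝ → Fin 2 → ℝ) (κ : ℝ → ℝ)
    (v : (Fin 2 → ℝ) → Fin 2 → ℝ)
    (hγ : ∀ s ∈ Set.Ioo a b, HasDerivAt γ (τ s) s)
    (hτcont : ContinuousOn τ (Set.Ioo a b))
    (hτunit : ∀ s ∈ Set.Ioo a b, dot2 (τ s) (τ s) = 1)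
    (hnunit : ∀ s ∈ Set.Ioo a b, dot2 (n s) (n s) = 1)
    (hτdef : ∀ s ∈ Set.Ioo a b, τ s = ![-(n s 1), n s 0])
    (hn' : ∀ s ∈ Set.Ioo a b, HasDerivAt n (κ s • τ s) s)
    (hv : ContDiff ℝ 1 v)
    (htang : ∀ s ∈ Set.Ioo a b, dot2 (v (γ s)) (n s) = 0) :
    ∀ s ∈ Set.Ioo a b,
      dot2 (fderiv ℝ v (γ s) (n s)) (τ s) =
        vort v (γ s) - κ s * dot2 (v (γ s)) (τ s) := by
  intro s hs
  have hA : HasFDerivAt v (fderiv ℝ v (γ s)) (γ s) :=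
    ((hv.differentiable one_ne_zero) (γ s)).hasFDerivAt
  set A := fderiv ℝ v (γ s) with hAdef
  have hvγ : HasDerivAt (fun t => v (γ t)) (A (τ s)) s := hA.comp_hasDerivAt s (hγ s hs)
  -- derivative of each coordinate
  have hvi : ∀ i, HasDerivAt (fun t => v (γ t) i) (A (τ s) i) s :=
    fun i => hasDerivAt_pi.mp hvγ i
  have hni : ∀ i, HasDerivAt (fun t => n t i) ((κ s • τ s) i) s :=
    fun i => hasDerivAt_pi.mp (hn' s hs) i
  have hf : HasDerivAt (fun t => dot2 (v (γ t)) (n t))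
      (A (τ s) 0 * n s 0 + v (γ s) 0 * (κ s • τ s) 0 +
       (A (τ s) 1 * n s 1 + v (γ s) 1 * (κ s • τ s) 1)) s := by
    unfold dot2
    exact ((hvi 0).mul (hni 0)).add ((hvi 1).mul (hni 1))
  have hf0 : HasDerivAt (fun t => dot2 (v (γ t)) (n t)) 0 s := by
    apply (hasDerivAt_const s (0 : ℝ)).congr_of_eventuallyEq
    filter_upwards [isOpen_Ioo.mem_nhds hs] with t ht using htang t ht
  have hzero := hf.unique hf0
  -- decompose n s into the standard basis
  have hbasis : ∀ w : Fin 2 → ℝ, w = w 0 • (Pi.single 0 1 : Fin 2 → ℝ) + w 1 • (Pi.single 1 1 : Fin 2 → ℝ) := by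
    intro w
    funext i
    fin_cases i <;> simp
  have hAn : A (n s) = n s 0 • A (Pi.single 0 1) + n s 1 • A (Pi.single 1 1) := by
    conv_lhs => rw [hbasis (n s)]
    rw [map_add, map_smul, map_smul]
  have hτc0 : τ s 0 = -(n s 1) := by rw [hτdef s hs]; simp
  have hτc1 : τ s 1 = n s 0 := by rw [hτdef s hs]; simp
  have hAτ : A (τ s) = (-(n s 1)) • A (Pi.single 0 1) + n s 0 • A (Pi.single 1 1) := by
    conv_lhs => rw [hbasis (τ s)]
    rw [hτc0, hτc1, map_add, map_smul, map_smul]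
  have hn1 := hnunit s hs
  unfold dot2 at hn1 ⊢
  unfold vort
  rw [hAn]
  rw [hAτ] at hzero
  simp only [Pi.add_apply, Pi.smul_apply, smul_eq_mul, hτc0, hτc1] at hzero ⊢
  linear_combination hzero + (A (Pi.single 0 1) 1 - A (Pi.single 1 1) 0) * hn1

end
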